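/- For a square-free monomial ideal I ⊆ k[x_1,...,x_n] and a variable y, the equality in_y(I) = C_{y,I} ∩ (N_{y,I} + ⟨y⟩) always holds, i.e., every square-free monomial ideal has a geometric vertex decomposition with respect to every variable. -/
import Mathlib


open MvPolynomial

noncomputable section

/-- The initial `y`-form of a polynomial: if `f = ∑ αᵢ yⁱ` with the `αᵢ` not involving `y`,
then `inyForm y f = α_d y^d` where `d` is maximal with `α_d ≠ 0`. -/
def inyForm {k : Type} [Field k] {n : ℕ} (y : Fin n) (f : MvPolynomial (Fin n) k) :
    MvPolynomial (Fin n) k :=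
  ∑ m ∈ f.support.filter (fun m => m y = f.degreeOf y), monomial m (f.coeff m)

/-- The ideal generated by all initial `y`-forms of elements of `I`. -/
def inyIdeal {k : Type} [Field k] {n : ℕ} (y : Fin n) (I : Ideal (MvPolynomial (Fin n) k)) :
    Ideal (MvPolynomial (Fin n) k) :=
  Ideal.span { p | ∃ f ∈ I, p = inyForm y f }

/-- For `g = q y^d + r` with `in_y(g) = q y^d` and `y` not dividing any term of `q`,
`qPart y g` is the polynomial `q`. -/
def qPart {k : Type} [Field k] {n : ℕ} (y : Fin n) (g : MvPolynomial (Fin n) k) :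
    MvPolynomial (Fin n) k :=
  ∑ m ∈ g.support.filter (fun m => m y = g.degreeOf y),
    monomial (m - Finsupp.single y (g.degreeOf y)) (g.coeff m)

/-- The ideal `C_{y,I}` computed from a (Gröbner) generating set `G`. -/
def CIdeal {k : Type} [Field k] {n : ℕ} (y : Fin n) (G : Finset (MvPolynomial (Fin n) k)) :
    Ideal (MvPolynomial (Fin n) k) :=
  Ideal.span (qPart y '' (G : Set (MvPolynomial (Fin n) k)))

/-- The ideal `N_{y,I}` computed from a (Gröbner) generating set `G`:
generated by those `q_i` with `d_i = 0`. -/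
def NIdeal {k : Type} [Field k] {n : ℕ} (y : Fin n) (G : Finset (MvPolynomial (Fin n) k)) :
    Ideal (MvPolynomial (Fin n) k) :=
  Ideal.span (qPart y '' { g | g ∈ G ∧ g.degreeOf y = 0 })

/-- `μ` is the leading monomial of `f` with respect to the monomial order `m`. -/
def LeadMonomialIs {k : Type} [Field k] {n : ℕ} (m : MonomialOrder (Fin n))
    (f : MvPolynomial (Fin n) k) (μ : Fin n →₀ ℕ) : Prop :=
  μ ∈ f.support ∧ ∀ ν ∈ f.support, m.toSyn ν ≤ m.toSyn μ

/-- `t` is the initial term `in_<(f)` of `f` with respect to the monomial order `m`. -/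
def InitialTermIs {k : Type} [Field k] {n : ℕ} (m : MonomialOrder (Fin n))
    (f t : MvPolynomial (Fin n) k) : Prop :=
  ∃ μ, LeadMonomialIs m f μ ∧ t = monomial μ (f.coeff μ)

/-- A monomial order `m` is `y`-compatible if `in_<(f) = in_<(in_y(f))` for all `f`. -/
def YCompatible (k : Type) [Field k] {n : ℕ} (m : MonomialOrder (Fin n)) (y : Fin n) : Prop :=
  ∀ f : MvPolynomial (Fin n) k, f ≠ 0 →
    ∀ t, InitialTermIs m f t ↔ InitialTermIs m (inyForm y f) t

/-- `G` is a Gröbner basis of `I` with respect to the monomial order `m`: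
`G ⊆ I` and the leading monomial of every nonzero element of `I` is divisible by the
leading monomial of some element of `G`. -/
def IsGB {k : Type} [Field k] {n : ℕ} (m : MonomialOrder (Fin n))
    (I : Ideal (MvPolynomial (Fin n) k)) (G : Finset (MvPolynomial (Fin n) k)) : Prop :=
  (G : Set (MvPolynomial (Fin n) k)) ⊆ I ∧ (0 : MvPolynomial (Fin n) k) ∉ G ∧
    ∀ f ∈ I, f ≠ 0 → ∃ g ∈ G, ∃ μ ν, LeadMonomialIs m g μ ∧ LeadMonomialIs m f ν ∧ μ ≤ ν

namespace SqfGvd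

variable {k : Type} [Field k] {n : ℕ}

/-- The exponent vector of the squarefree monomial `∏ i ∈ F, X i`. -/
def ind {n : ℕ} (F : Finset (Fin n)) : Fin n →₀ ℕ := ∑ i ∈ F, Finsupp.single i 1

lemma ind_apply (F : Finset (Fin n)) (j : Fin n) : ind F j = if j ∈ F then 1 else 0 := by
  classical
  rw [ind, Finset.sum_apply']
  simp [Finsupp.single_apply]

lemma prodX (F : Finset (Fin n)) :
    (∏ i ∈ F, X i : MvPolynomial (Fin n) k) = monomial (ind F) 1 := by
  rw [ind, monomial_sum_one]
  exact Finset.prod_congr rfl fun i _ => by rw [← X_pow_eq_monomial, pow_one]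

lemma support_inyForm (y : Fin n) (f : MvPolynomial (Fin n) k) :
    (inyForm y f).support ⊆ f.support := by
  intro m hm
  have hne := MvPolynomial.mem_support_iff.mp hm
  simp only [inyForm, MvPolynomial.coeff_sum, MvPolynomial.coeff_monomial] at hne
  by_contra h
  apply hne
  apply Finset.sum_eq_zero
  intro m' _
  split_ifs with he
  · subst he; exact MvPolynomial.notMem_support_iff.mp h
  · rfl

lemma inyForm_monomial (y : Fin n) (s : Fin n →₀ ℕ) (c : k) (hc : c ≠ 0) :
    inyForm y (monomial s c) = monomial s c := by
  classical
  have hs : (monomial s c).support = {s} := by rw [support_monomial, if_neg hc]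
  have hd : (monomial s c).degreeOf y = s y := by
    rw [degreeOf_eq_sup, hs, Finset.sup_singleton]
  rw [inyForm, hs, hd]
  rw [Finset.filter_singleton, if_pos rfl, Finset.sum_singleton, coeff_monomial, if_pos rfl]

/-- `in_y` of a monomial ideal is itself. -/
lemma iny_span (y : Fin n) (S : Set (Fin n →₀ ℕ)) :
    inyIdeal y (Ideal.span ((fun s => monomial s (1 : k)) '' S))
      = Ideal.span ((fun s => monomial s (1 : k)) '' S) := by
  apply le_antisymm
  · rw [inyIdeal, Ideal.span_le]
    rintro p ⟨f, hf, rfl⟩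
    have hf' : f ∈ Ideal.span ((fun s => monomial s (1 : k)) '' S) := hf
    rw [mem_ideal_span_monomial_image] at hf'
    show inyForm y f ∈ Ideal.span ((fun s => monomial s (1 : k)) '' S)
    rw [mem_ideal_span_monomial_image]
    exact fun m hm => hf' m (support_inyForm y f hm)
  · rw [Ideal.span_le]
    rintro p ⟨s, hs, rfl⟩
    apply Ideal.subset_span
    exact ⟨monomial s 1, Ideal.subset_span ⟨s, hs, rfl⟩,
      (inyForm_monomial y s 1 one_ne_zero).symm⟩

lemma set_eq (M : Set (Finset (Fin n))) (φ : Finset (Fin n) → Finset (Fin n)) :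
    { p : MvPolynomial (Fin n) k | ∃ F ∈ M, p = ∏ i ∈ φ F, X i }
      = (fun s => monomial s (1 : k)) '' ((fun F => ind (φ F)) '' M) := by
  ext p
  constructor
  · rintro ⟨F, hF, rfl⟩
    exact ⟨ind (φ F), ⟨F, hF, rfl⟩, (prodX (φ F)).symm⟩
  · rintro ⟨s, ⟨F, hF, rfl⟩, rfl⟩
    exact ⟨F, hF, (prodX (φ F)).symm⟩

lemma key (y : Fin n) (M : Set (Finset (Fin n))) (m : Fin n →₀ ℕ) :
    (∃ F ∈ M, ind F ≤ m) ↔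
      (∃ F ∈ M, ind (F.erase y) ≤ m) ∧
        ((∃ F ∈ M, y ∉ F ∧ ind F ≤ m) ∨ Finsupp.single y 1 ≤ m) := by
  constructor
  · rintro ⟨F, hF, h⟩
    have hE : ind (F.erase y) ≤ m := by
      refine le_trans (Finsupp.le_def.mpr fun j => ?_) h
      rw [ind_apply, ind_apply]
      by_cases hj : j ∈ F.erase y
      · rw [if_pos hj, if_pos (Finset.mem_of_mem_erase hj)]
      · simp [hj]
    refine ⟨⟨F, hF, hE⟩, ?_⟩
    by_cases hy : y ∈ F
    · right
      rw [Finsupp.single_le_iff]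
      have := Finsupp.le_def.mp h y
      rwa [ind_apply, if_pos hy] at this
    · exact Or.inl ⟨F, hF, hy, h⟩
  · rintro ⟨⟨F, hF, hE⟩, hor⟩
    rcases hor with ⟨G, hG, _, hGm⟩ | hy
    · exact ⟨G, hG, hGm⟩
    · refine ⟨F, hF, Finsupp.le_def.mpr fun j => ?_⟩
      by_cases hj : j = y
      · subst hj
        refine le_trans ?_ (Finsupp.single_le_iff.mp hy)
        rw [ind_apply]; split_ifs <;> simp
      · have := Finsupp.le_def.mp hE j
        rw [ind_apply] at this ⊢
        simpa [Finset.mem_erase, hj] using this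

lemma key' (y : Fin n) (M : Set (Finset (Fin n))) (m : Fin n →₀ ℕ) :
    (∃ si ∈ (fun F => ind F) '' M, si ≤ m) ↔
      (∃ si ∈ (fun F => ind (F.erase y)) '' M, si ≤ m) ∧
        (∃ si ∈ ((fun F => ind F) '' {F | F ∈ M ∧ y ∉ F} ∪ {Finsupp.single y 1}), si ≤ m) := by
  have h1 : (∃ si ∈ (fun F => ind F) '' M, si ≤ m) ↔ ∃ F ∈ M, ind F ≤ m := by
    constructor
    · rintro ⟨si, ⟨F, hF, rfl⟩, h⟩; exact ⟨F, hF, h⟩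
    · rintro ⟨F, hF, h⟩; exact ⟨_, ⟨F, hF, rfl⟩, h⟩
  have h2 : (∃ si ∈ (fun F => ind (F.erase y)) '' M, si ≤ m)
      ↔ ∃ F ∈ M, ind (F.erase y) ≤ m := by
    constructor
    · rintro ⟨si, ⟨F, hF, rfl⟩, h⟩; exact ⟨F, hF, h⟩
    · rintro ⟨F, hF, h⟩; exact ⟨_, ⟨F, hF, rfl⟩, h⟩
  have h3 : (∃ si ∈ ((fun F => ind F) '' {F | F ∈ M ∧ y ∉ F} ∪ {Finsupp.single y 1}), si ≤ m)
      ↔ ((∃ F ∈ M, y ∉ F ∧ ind F ≤ m) ∨ Finsupp.single y 1 ≤ m) := by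
    constructor
    · rintro ⟨si, hsi | hsi, h⟩
      · obtain ⟨F, ⟨hF, hy⟩, rfl⟩ := hsi; exact Or.inl ⟨F, hF, hy, h⟩
      · rw [Set.mem_singleton_iff] at hsi; subst hsi; exact Or.inr h
    · rintro (⟨F, hF, hy, h⟩ | h)
      · exact ⟨_, Or.inl ⟨F, ⟨hF, hy⟩, rfl⟩, h⟩
      · exact ⟨_, Or.inr rfl, h⟩
  rw [h1, h2, h3]
  exact key y M m

end SqfGvd

/-- every square-free monomial ideal has a geometric vertex decomposition with
respect to every variable: `in_y(I) = C_{y,I} ∩ (N_{y,I} + ⟨y⟩)`, where `I` is generated by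
the square-free monomials `∏_{i ∈ F} x_i`, `F ∈ M`, `M` an antichain (minimal generators). -/
theorem squarefree_monomial_gvd {k : Type} [Field k] {n : ℕ} (y : Fin n)
    (M : Set (Finset (Fin n))) (hmin : ∀ F ∈ M, ∀ G ∈ M, G ⊆ F → G = F) :
    inyIdeal y (Ideal.span { p : MvPolynomial (Fin n) k |
        ∃ F ∈ M, p = ∏ i ∈ F, MvPolynomial.X i })
      = Ideal.span { p : MvPolynomial (Fin n) k | ∃ F ∈ M, p = ∏ i ∈ F.erase y, MvPolynomial.X i }
        ⊓ (Ideal.span { p : MvPolynomial (Fin n) k | ∃ F ∈ M, y ∉ F ∧ p = ∏ i ∈ F, MvPolynomial.X i }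
            + Ideal.span {MvPolynomial.X y}) := by
  classical
  have hA : { p : MvPolynomial (Fin n) k | ∃ F ∈ M, p = ∏ i ∈ F, MvPolynomial.X i }
      = (fun s => monomial s (1 : k)) '' ((fun F => SqfGvd.ind F) '' M) :=
    SqfGvd.set_eq M (fun F => F)
  have hC : { p : MvPolynomial (Fin n) k | ∃ F ∈ M, p = ∏ i ∈ F.erase y, MvPolynomial.X i }
      = (fun s => monomial s (1 : k)) '' ((fun F => SqfGvd.ind (F.erase y)) '' M) :=
    SqfGvd.set_eq M (fun F => F.erase y)
  have hN : { p : MvPolynomial (Fin n) k | ∃ F ∈ M, y ∉ F ∧ p = ∏ i ∈ F, MvPolynomial.X i }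
      = (fun s => monomial s (1 : k)) ''
          ((fun F => SqfGvd.ind F) '' {F | F ∈ M ∧ y ∉ F}) := by
    have := SqfGvd.set_eq (k := k) {F | F ∈ M ∧ y ∉ F} (fun F => F)
    rw [← this]
    ext p
    constructor
    · rintro ⟨F, hF, hy, rfl⟩; exact ⟨F, ⟨hF, hy⟩, rfl⟩
    · rintro ⟨F, ⟨hF, hy⟩, rfl⟩; exact ⟨F, hF, hy, rfl⟩
  have hY : ({MvPolynomial.X y} : Set (MvPolynomial (Fin n) k))
      = (fun s => monomial s (1 : k)) '' {Finsupp.single y 1} := by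
    rw [Set.image_singleton, ← X_pow_eq_monomial, pow_one]
  rw [hA, hC, hN, hY, SqfGvd.iny_span, Submodule.add_eq_sup, ← Ideal.span_union,
    ← Set.image_union]
  ext f
  rw [Submodule.mem_inf, mem_ideal_span_monomial_image, mem_ideal_span_monomial_image,
    mem_ideal_span_monomial_image]
  constructor
  · intro h
    exact ⟨fun m hm => ((SqfGvd.key' y M m).mp (h m hm)).1,
      fun m hm => ((SqfGvd.key' y M m).mp (h m hm)).2⟩
  · rintro ⟨h1, h2⟩ m hm
    exact (SqfGvd.key' y M m).mpr ⟨h1 m hm, h2 m hm⟩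

end
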